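/- Let β, Γ, Ω ∈ ℝ with β ≠ 0 and Γ ≠ 0, and let A : ℝ → ℝ be twice differentiable, not identically zero, satisfying -β·A''(X) + Γ·A(X)³ = Ω·A(X) for all X ∈ ℝ and A(X) → 0, A'(X) → 0 as X → +∞ and as X → -∞. Then Γ·Ω > 0; in particular Ω ≠ 0 and sign(Ω) = sign(Γ). -/

import Mathlib

open Filter

/-- A nontrivial real bound state of the stationary NLS equation
`-βA'' + ΓA³ = ΩA` (decaying with its derivative at `±∞`) exists only if `ΓΩ > 0`. -/
theorem nls_bound_state_necessary_condition
    (β Γ Ω : ℝ) (hβ : β ≠ 0) (hΓ : Γ ≠ 0)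
    (A A' A'' : ℝ → ℝ)
    (hA : ∀ X, HasDerivAt A (A' X) X)
    (hA' : ∀ X, HasDerivAt A' (A'' X) X)
    (heq : ∀ X : ℝ, -β * A'' X + Γ * (A X) ^ 3 = Ω * A X)
    (hne : ∃ X : ℝ, A X ≠ 0)
    (hlimA : Tendsto A atTop (nhds 0))
    (hlimA' : Tendsto A' atTop (nhds 0))
    (hlimA2 : Tendsto A atBot (nhds 0))
    (hlimA2' : Tendsto A' atBot (nhds 0)) :
    Γ * Ω > 0 := by
  set H : ℝ → ℝ := fun X => β * (A' X) ^ 2 / 2 + Ω * (A X) ^ 2 / 2 - Γ * (A X) ^ 4 / 4 with hHdef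
  -- H has zero derivative everywhere
  have hHderiv : ∀ X, HasDerivAt H 0 X := by
    intro X
    have h1 : HasDerivAt H
        (β * (2 * A' X * A'' X) / 2 + Ω * (2 * A X * A' X) / 2
          - Γ * (4 * (A X) ^ 3 * A' X) / 4) X := by
      have ha := (((hA' X).fun_pow 2).const_mul β).div_const 2
      have h2 := (((hA X).fun_pow 2).const_mul Ω).div_const 2
      have h3 := (((hA X).fun_pow 4).const_mul Γ).div_const 4
      have := (ha.fun_add h2).fun_sub h3
      refine this.congr_deriv ?_
      push_cast
      ring
    have hval : β * (2 * A' X * A'' X) / 2 + Ω * (2 * A X * A' X) / 2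
        - Γ * (4 * (A X) ^ 3 * A' X) / 4 = 0 := by
      have hβA : β * A'' X = Γ * (A X) ^ 3 - Ω * A X := by linarith [heq X]
      linear_combination (A' X) * hβA
    rwa [hval] at h1
  -- H is constant
  have hHconst : ∀ X Y : ℝ, H X = H Y := by
    have hdz : ∀ x, deriv H x = 0 := fun x => (hHderiv x).deriv
    have hdiff : Differentiable ℝ H := fun x => (hHderiv x).differentiableAt
    exact is_const_of_deriv_eq_zero hdiff hdz
  -- H tends to 0 at atTop, hence H ≡ 0
  have hHlim : Tendsto H atTop (nhds (β * 0 ^ 2 / 2 + Ω * 0 ^ 2 / 2 - Γ * 0 ^ 4 / 4)) :=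
    ((((hlimA'.pow 2).const_mul β).div_const 2).add
      (((hlimA.pow 2).const_mul Ω).div_const 2)).sub
      (((hlimA.pow 4).const_mul Γ).div_const 4)
  have hH0 : ∀ X, H X = 0 := by
    intro X
    have h1 : Tendsto H atTop (nhds (H X)) := by
      have hfun : H = fun _ => H X := funext fun Y => hHconst Y X
      rw [hfun]; exact tendsto_const_nhds
    have := tendsto_nhds_unique h1 hHlim
    simpa using this
  -- A² attains a positive maximum
  obtain ⟨X₁, hX₁⟩ := hne
  have hdiffA : Differentiable ℝ A := fun x => (hA x).differentiableAt
  have hcontA : Continuous A := hdiffA.continuous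
  have hcontf : Continuous fun X => (A X) ^ 2 := hcontA.pow 2
  have hfX₁ : 0 < (A X₁) ^ 2 := by positivity
  -- (A ·)^2 tends to 0 at cocompact
  have hlimf : Tendsto (fun X => (A X) ^ 2) (cocompact ℝ) (nhds 0) := by
    rw [cocompact_eq_atBot_atTop]
    have h1 : Tendsto (fun X => (A X) ^ 2) atBot (nhds (0 ^ 2)) := hlimA2.pow 2
    have h2 : Tendsto (fun X => (A X) ^ 2) atTop (nhds (0 ^ 2)) := hlimA.pow 2
    simpa using Tendsto.sup h1 h2
  have hev : ∀ᶠ X in cocompact ℝ, (A X) ^ 2 ≤ (A X₁) ^ 2 :=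
    (hlimf.eventually (eventually_le_nhds hfX₁)).mono fun x hx => hx
  obtain ⟨X₀, hX₀⟩ := hcontf.exists_forall_ge' X₁ hev
  have hA₀pos : 0 < (A X₀) ^ 2 := lt_of_lt_of_le hfX₁ (hX₀ X₁)
  have hA₀ne : A X₀ ≠ 0 := fun h => by simp [h] at hA₀pos
  -- derivative of A² at X₀ is zero
  have hmax : IsLocalMax (fun X => (A X) ^ 2) X₀ :=
    (isMaxOn_univ_iff.mpr hX₀ : IsMaxOn _ Set.univ X₀).isLocalMax Filter.univ_mem
  have hder : HasDerivAt (fun X => (A X) ^ 2) (2 * A X₀ * A' X₀) X₀ := by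
    simpa using (hA X₀).fun_pow 2
  have hzero : 2 * A X₀ * A' X₀ = 0 := hmax.hasDerivAt_eq_zero hder
  have hA'₀ : A' X₀ = 0 := by
    rcases mul_eq_zero.mp hzero with h | h
    · rcases mul_eq_zero.mp h with h' | h'
      · norm_num at h'
      · exact absurd h' hA₀ne
    · exact h
  -- from H X₀ = 0 : Ω = Γ * A X₀ ^ 2 / 2
  have hH₀ := hH0 X₀
  simp only [hHdef, hA'₀] at hH₀
  have hΩ : Ω = Γ * (A X₀) ^ 2 / 2 := by
    have h4 : (A X₀) ^ 4 = (A X₀) ^ 2 * (A X₀) ^ 2 := by ring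
    field_simp at hH₀ ⊢
    nlinarith [hA₀pos, hH₀]
  rw [hΩ]
  have : Γ * (Γ * (A X₀) ^ 2 / 2) = Γ ^ 2 * (A X₀) ^ 2 / 2 := by ring
  rw [this]
  positivity
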